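/- Let Y be a locally compact Hausdorff (Tychonoff) space, and let X be a k_ℝ-space. Then the product X × Y is a k_ℝ-space. -/

import Mathlib

open Set Filter Topology

/-- A set `H` of continuous real-valued functions is equicontinuous. -/
def EquicontinuousSet {X : Type*} [TopologicalSpace X] (H : Set C(X, ℝ)) : Prop :=
  ∀ x : X, ∀ ε : ℝ, 0 < ε → ∃ U ∈ 𝓝 x, ∀ x' ∈ U, ∀ f ∈ H, |f x' - f x| < ε

/-- `X` is Ascoli: every compact subset of `C_k(X)` is equicontinuous. -/
def AscoliSpace (X : Type*) [TopologicalSpace X] : Prop :=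
  ∀ K : Set C(X, ℝ), IsCompact K → EquicontinuousSet K

/-- `X` is sequentially Ascoli: every convergent sequence in `C_k(X)` is equicontinuous. -/
def SeqAscoliSpace (X : Type*) [TopologicalSpace X] : Prop :=
  ∀ (f : ℕ → C(X, ℝ)) (g : C(X, ℝ)), Tendsto f atTop (𝓝 g) →
    EquicontinuousSet (Set.range f ∪ {g})

/-- A function is `k`-continuous if its restriction to every compact subset is continuous. -/
def KContinuous {X Y : Type*} [TopologicalSpace X] [TopologicalSpace Y] (f : X → Y) : Prop :=
  ∀ K : Set X, IsCompact K → ContinuousOn f K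

/-- `X` is a `k_ℝ`-space if every `k`-continuous real-valued function is continuous. -/
def KRSpace (X : Type*) [TopologicalSpace X] : Prop :=
  ∀ f : X → ℝ, KContinuous f → Continuous f

/-- `X` is an `s_ℝ`-space if every sequentially continuous real-valued function is continuous. -/
def SRSpace (X : Type*) [TopologicalSpace X] : Prop :=
  ∀ f : X → ℝ, SeqContinuous f → Continuous f

/-- A function on a product is separately continuous. -/
def SeparatelyContinuous {X K : Type*} [TopologicalSpace X] [TopologicalSpace K]
    (Φ : X × K → ℝ) : Prop :=
  (∀ x : X, Continuous fun k => Φ (x, k)) ∧ (∀ k : K, Continuous fun x => Φ (x, k))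

/-- `X` is pseudocompact: every continuous real-valued function on `X` is bounded. -/
def Pseudocompact (X : Type*) [TopologicalSpace X] : Prop :=
  ∀ f : X → ℝ, Continuous f → ∃ M : ℝ, ∀ x : X, |f x| ≤ M

/-- A subset `A` of `X` is functionally bounded if every continuous real-valued
function on `X` is bounded on `A`. -/
def FunctionallyBounded {X : Type*} [TopologicalSpace X] (A : Set X) : Prop :=
  ∀ f : X → ℝ, Continuous f → ∃ M : ℝ, ∀ a ∈ A, |f a| ≤ M

/-- An `R`-quotient map: a continuous surjection such that real-valued functions on the
codomain are continuous as soon as their composition with the map is continuous. -/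
def RQuotientMap {X Y : Type*} [TopologicalSpace X] [TopologicalSpace Y] (p : X → Y) : Prop :=
  Continuous p ∧ Function.Surjective p ∧ ∀ φ : Y → ℝ, Continuous (φ ∘ p) → Continuous φ

theorem kRSpace_prod_locallyCompact {X Y : Type*} [TopologicalSpace X] [T35Space X]
    [TopologicalSpace Y] [T35Space Y] [LocallyCompactSpace Y]
    (hX : KRSpace X) : KRSpace (X × Y) := by
  intro f hf
  rw [continuous_iff_continuousAt]
  rintro ⟨x₀, y₀⟩
  obtain ⟨K, hK, hKn⟩ := exists_compact_mem_nhds y₀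
  haveI : CompactSpace K := isCompact_iff_compactSpace.mp hK
  have hFc : ∀ x : X, Continuous fun y : K => f (x, ↑y) - f (x₀, ↑y) := by
    intro x
    have h1 : Continuous fun y : K => f (x, ↑y) :=
      (hf ({x} ×ˢ K) (isCompact_singleton.prod hK)).comp_continuous
        (by continuity) (fun y => ⟨rfl, y.2⟩)
    have h2 : Continuous fun y : K => f (x₀, ↑y) :=
      (hf ({x₀} ×ˢ K) (isCompact_singleton.prod hK)).comp_continuous
        (by continuity) (fun y => ⟨rfl, y.2⟩)
    exact h1.sub h2
  set F : X → C(K, ℝ) := fun x => ⟨_, hFc x⟩ with hF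
  set φ : X → ℝ := fun x => ‖F x‖ with hφ
  have hφ0 : φ x₀ = 0 := by
    have : F x₀ = 0 := by ext y; simp [hF]
    simp [hφ, this]
  have hφk : KContinuous φ := by
    intro L hL
    have hL' : IsCompact (insert x₀ L) := hL.insert x₀
    have hfc : ContinuousOn f ((insert x₀ L) ×ˢ K) := hf _ (hL'.prod hK)
    have hG0 : Continuous fun p : ↥(insert x₀ L) × ↥K =>
        f (↑p.1, ↑p.2) - f (x₀, ↑p.2) := by
      have h1 : Continuous fun p : ↥(insert x₀ L) × ↥K => f (↑p.1, ↑p.2) :=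
        hfc.comp_continuous (by continuity) (fun p => ⟨p.1.2, p.2.2⟩)
      have h2 : Continuous fun p : ↥(insert x₀ L) × ↥K => f (x₀, ↑p.2) :=
        hfc.comp_continuous (by continuity) (fun p => ⟨mem_insert _ _, p.2.2⟩)
      exact h1.sub h2
    have key : ContinuousOn φ (insert x₀ L) := by
      rw [continuousOn_iff_continuous_restrict]
      have heq : (insert x₀ L).domRestrict φ
          = fun a => ‖(ContinuousMap.curry ⟨_, hG0⟩ : C(_, C(K, ℝ))) a‖ := by
        funext a
        congr 1
      rw [heq]
      exact continuous_norm.comp (ContinuousMap.curry _).continuous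
    exact key.mono (subset_insert _ _)
  have hφc : Continuous φ := hX φ hφk
  have hy : ContinuousAt (fun y => f (x₀, y)) y₀ := by
    have hcK : ContinuousOn (fun y => f (x₀, y)) K := by
      have hfc : ContinuousOn f ({x₀} ×ˢ K) := hf _ (isCompact_singleton.prod hK)
      exact hfc.comp ((continuous_const.prodMk continuous_id).continuousOn)
        (fun y hy => ⟨rfl, hy⟩)
    exact hcK.continuousAt hKn
  rw [ContinuousAt, Metric.tendsto_nhds]
  intro ε hε
  have hU : ∀ᶠ x in 𝓝 x₀, φ x < ε / 2 := by
    have := (hφc.tendsto x₀).eventually (eventually_lt_nhds (by rw [hφ0]; linarith : φ x₀ < ε / 2))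
    exact this
  have hV : ∀ᶠ y in 𝓝 y₀, dist (f (x₀, y)) (f (x₀, y₀)) < ε / 2 :=
    Metric.tendsto_nhds.mp hy (ε / 2) (by linarith)
  have hKev : ∀ᶠ y in 𝓝 y₀, y ∈ K := hKn
  rw [nhds_prod_eq]
  filter_upwards [hU.prod_mk (hV.and hKev)] with p hp
  obtain ⟨hpU, hpV, hpK⟩ := hp
  have h1 : dist (f p) (f (x₀, p.2)) ≤ φ p.1 := by
    have := ContinuousMap.norm_coe_le_norm (F p.1) ⟨p.2, hpK⟩
    simpa [hF, Real.dist_eq, Real.norm_eq_abs] using this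
  calc dist (f p) (f (x₀, y₀))
      ≤ dist (f p) (f (x₀, p.2)) + dist (f (x₀, p.2)) (f (x₀, y₀)) := dist_triangle _ _ _
    _ < ε / 2 + ε / 2 := by
        exact add_lt_add (h1.trans_lt hpU) hpV
    _ = ε := by ring
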